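/- The map X : ℝ² → ℝ³ defined (for a fixed real parameter a > 0) by X(u,v) = ( [a·cos u·sin(a v)·cosh(a u)·cosh v − a·sin u·cos(a v)·sinh(a u)·sinh v + cos u·cos(a v)·cosh(a u)·sinh v + sin u·sin(a v)·sinh(a u)·cosh v]/(a²+1) + cos u·cosh v , [a·cos u·cos(a v)·sinh(a u)·sinh v + a·sin u·sin(a v)·cosh(a u)·cosh v + sin u·cos(a v)·cosh(a u)·sinh v − cos u·sin(a v)·sinh(a u)·cosh v]/(a²+1) + sin u·cosh v , −sin(a v)·sinh(a u)/a ) is Lorentz-conformal: for all (u,v) ∈ ℝ², ⟨X_u, X_u⟩_L = ⟨X_v, X_v⟩_L and ⟨X_u, X_v⟩_L = 0, where X_u, X_v denote the partial derivatives of X. -/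

import Mathlib

open Real

/-- Lorentzian inner product on ℝ³: ⟨p,q⟩ = p₁q₁ + p₂q₂ − p₃q₃. -/
noncomputable def lorentz (p q : ℝ × ℝ × ℝ) : ℝ :=
  p.1 * q.1 + p.2.1 * q.2.1 - p.2.2 * q.2.2

/-- First coordinate of the bending helicoid with timelike axis. -/
noncomputable def X1 (a u v : ℝ) : ℝ :=
  (a * cos u * sin (a*v) * cosh (a*u) * cosh v
   - a * sin u * cos (a*v) * sinh (a*u) * sinh v
   + cos u * cos (a*v) * cosh (a*u) * sinh v
   + sin u * sin (a*v) * sinh (a*u) * cosh v) / (a^2 + 1)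
  + cos u * cosh v

/-- Second coordinate of the bending helicoid with timelike axis. -/
noncomputable def X2 (a u v : ℝ) : ℝ :=
  (a * cos u * cos (a*v) * sinh (a*u) * sinh v
   + a * sin u * sin (a*v) * cosh (a*u) * cosh v
   + sin u * cos (a*v) * cosh (a*u) * sinh v
   - cos u * sin (a*v) * sinh (a*u) * cosh v) / (a^2 + 1)
  + sin u * cosh v

/-- Third coordinate of the bending helicoid with timelike axis. -/
noncomputable def X3 (a u v : ℝ) : ℝ :=
  - (sin (a*v) * sinh (a*u)) / a

/-- Partial derivative of X with respect to u. -/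
noncomputable def Xu (a u v : ℝ) : ℝ × ℝ × ℝ :=
  (deriv (fun s => X1 a s v) u, deriv (fun s => X2 a s v) u, deriv (fun s => X3 a s v) u)

/-- Partial derivative of X with respect to v. -/
noncomputable def Xv (a u v : ℝ) : ℝ × ℝ × ℝ :=
  (deriv (fun t => X1 a u t) v, deriv (fun t => X2 a u t) v, deriv (fun t => X3 a u t) v)

lemma hder_cosh_au (a u : ℝ) : HasDerivAt (fun s : ℝ => cosh (a*s)) (a * sinh (a*u)) u := by
  have h := (Real.hasDerivAt_cosh (a*u)).comp u ((hasDerivAt_id u).const_mul a)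
  simpa [Function.comp_def, mul_comm] using h

lemma hder_sinh_au (a u : ℝ) : HasDerivAt (fun s : ℝ => sinh (a*s)) (a * cosh (a*u)) u := by
  have h := (Real.hasDerivAt_sinh (a*u)).comp u ((hasDerivAt_id u).const_mul a)
  simpa [Function.comp_def, mul_comm] using h

lemma hder_sin_av (a v : ℝ) : HasDerivAt (fun t : ℝ => sin (a*t)) (a * cos (a*v)) v := by
  have h := (Real.hasDerivAt_sin (a*v)).comp v ((hasDerivAt_id v).const_mul a)
  simpa [Function.comp_def, mul_comm] using h

lemma hder_cos_av (a v : ℝ) : HasDerivAt (fun t : ℝ => cos (a*t)) (-(a * sin (a*v))) v := by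
  have h := (Real.hasDerivAt_cos (a*v)).comp v ((hasDerivAt_id v).const_mul a)
  simpa [Function.comp_def, mul_comm] using h

lemma hX1u (a u v : ℝ) : HasDerivAt (fun s => X1 a s v)
    (((a * cos u * sinh (a*u) - sin u * cosh (a*u)) * (a * sin (a*v) * cosh v + cos (a*v) * sinh v)
      + (cos u * sinh (a*u) + a * sin u * cosh (a*u)) * (sin (a*v) * cosh v - a * cos (a*v) * sinh v)) / (a^2+1)
      - sin u * cosh v) u := by
  have hfun : (fun s => X1 a s v) = (fun s =>
      ((cos s * cosh (a*s)) * (a * sin (a*v) * cosh v + cos (a*v) * sinh v)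
        + (sin s * sinh (a*s)) * (sin (a*v) * cosh v - a * cos (a*v) * sinh v)) / (a^2+1)
      + cos s * cosh v) := by
    funext s; simp only [X1]; ring
  rw [hfun]
  have h := (((((Real.hasDerivAt_cos u).mul (hder_cosh_au a u)).mul_const
        (a * sin (a*v) * cosh v + cos (a*v) * sinh v)).add
      (((Real.hasDerivAt_sin u).mul (hder_sinh_au a u)).mul_const
        (sin (a*v) * cosh v - a * cos (a*v) * sinh v))).div_const (a^2+1)).add
      ((Real.hasDerivAt_cos u).mul_const (cosh v))
  refine h.congr_deriv ?_
  ring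

lemma hX2u (a u v : ℝ) : HasDerivAt (fun s => X2 a s v)
    (((cos u * cosh (a*u) + a * sin u * sinh (a*u)) * (a * sin (a*v) * cosh v + cos (a*v) * sinh v)
      - (a * cos u * cosh (a*u) - sin u * sinh (a*u)) * (sin (a*v) * cosh v - a * cos (a*v) * sinh v)) / (a^2+1)
      + cos u * cosh v) u := by
  have hfun : (fun s => X2 a s v) = (fun s =>
      ((sin s * cosh (a*s)) * (a * sin (a*v) * cosh v + cos (a*v) * sinh v)
        - (cos s * sinh (a*s)) * (sin (a*v) * cosh v - a * cos (a*v) * sinh v)) / (a^2+1)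
      + sin s * cosh v) := by
    funext s; simp only [X2]; ring
  rw [hfun]
  have h := (((((Real.hasDerivAt_sin u).mul (hder_cosh_au a u)).mul_const
        (a * sin (a*v) * cosh v + cos (a*v) * sinh v)).sub
      (((Real.hasDerivAt_cos u).mul (hder_sinh_au a u)).mul_const
        (sin (a*v) * cosh v - a * cos (a*v) * sinh v))).div_const (a^2+1)).add
      ((Real.hasDerivAt_sin u).mul_const (cosh v))
  refine h.congr_deriv ?_
  ring

lemma hX3u (a u v : ℝ) (ha : a ≠ 0) : HasDerivAt (fun s => X3 a s v)
    (-(sin (a*v) * cosh (a*u))) u := by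
  have hfun : (fun s => X3 a s v) = (fun s => -(sin (a*v) * sinh (a*s)) / a) := by
    funext s; simp only [X3]
  rw [hfun]
  have h := (((hder_sinh_au a u).const_mul (sin (a*v))).neg).div_const a
  refine h.congr_deriv ?_
  field_simp

lemma hX1v (a u v : ℝ) : HasDerivAt (fun t => X1 a u t)
    (((a * cos (a*v) * cosh v + sin (a*v) * sinh v) * (a * cos u * cosh (a*u) + sin u * sinh (a*u))
      + (cos (a*v) * cosh v - a * sin (a*v) * sinh v) * (cos u * cosh (a*u) - a * sin u * sinh (a*u))) / (a^2+1)
      + cos u * sinh v) v := by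
  have hfun : (fun t => X1 a u t) = (fun t =>
      ((sin (a*t) * cosh t) * (a * cos u * cosh (a*u) + sin u * sinh (a*u))
        + (cos (a*t) * sinh t) * (cos u * cosh (a*u) - a * sin u * sinh (a*u))) / (a^2+1)
      + cos u * cosh t) := by
    funext t; simp only [X1]; ring
  rw [hfun]
  have h := (((((hder_sin_av a v).mul (Real.hasDerivAt_cosh v)).mul_const
        (a * cos u * cosh (a*u) + sin u * sinh (a*u))).add
      (((hder_cos_av a v).mul (Real.hasDerivAt_sinh v)).mul_const
        (cos u * cosh (a*u) - a * sin u * sinh (a*u)))).div_const (a^2+1)).add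
      ((Real.hasDerivAt_cosh v).const_mul (cos u))
  refine h.congr_deriv ?_
  ring

lemma hX2v (a u v : ℝ) : HasDerivAt (fun t => X2 a u t)
    (((a * cos (a*v) * cosh v + sin (a*v) * sinh v) * (a * sin u * cosh (a*u) - cos u * sinh (a*u))
      + (cos (a*v) * cosh v - a * sin (a*v) * sinh v) * (a * cos u * sinh (a*u) + sin u * cosh (a*u))) / (a^2+1)
      + sin u * sinh v) v := by
  have hfun : (fun t => X2 a u t) = (fun t =>
      ((sin (a*t) * cosh t) * (a * sin u * cosh (a*u) - cos u * sinh (a*u))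
        + (cos (a*t) * sinh t) * (a * cos u * sinh (a*u) + sin u * cosh (a*u))) / (a^2+1)
      + sin u * cosh t) := by
    funext t; simp only [X2]; ring
  rw [hfun]
  have h := (((((hder_sin_av a v).mul (Real.hasDerivAt_cosh v)).mul_const
        (a * sin u * cosh (a*u) - cos u * sinh (a*u))).add
      (((hder_cos_av a v).mul (Real.hasDerivAt_sinh v)).mul_const
        (a * cos u * sinh (a*u) + sin u * cosh (a*u)))).div_const (a^2+1)).add
      ((Real.hasDerivAt_cosh v).const_mul (sin u))
  refine h.congr_deriv ?_
  ring

lemma hX3v (a u v : ℝ) (ha : a ≠ 0) : HasDerivAt (fun t => X3 a u t)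
    (-(cos (a*v) * sinh (a*u))) v := by
  have hfun : (fun t => X3 a u t) = (fun t => -(sin (a*t) * sinh (a*u)) / a) := by
    funext t; simp only [X3]
  rw [hfun]
  have h := (((hder_sin_av a v).mul_const (sinh (a*u))).neg).div_const a
  refine h.congr_deriv ?_
  field_simp

/-- The bending helicoid with timelike axis is Lorentz-conformal. -/
theorem bending_helicoid_timelike_conformal (a : ℝ) (ha : 0 < a) (u v : ℝ) :
    lorentz (Xu a u v) (Xu a u v) = lorentz (Xv a u v) (Xv a u v) ∧
    lorentz (Xu a u v) (Xv a u v) = 0 := by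
  have ha' : a ≠ 0 := ne_of_gt ha
  have hD : (a^2+1 : ℝ) ≠ 0 := by positivity
  have hsu := sin_sq_add_cos_sq u
  have hSV := sin_sq_add_cos_sq (a*v)
  have hch := Real.cosh_sq_sub_sinh_sq (a*u)
  have hc := Real.cosh_sq_sub_sinh_sq v
  simp only [Xu, Xv, lorentz, (hX1u a u v).deriv, (hX2u a u v).deriv, (hX3u a u v ha').deriv,
    (hX1v a u v).deriv, (hX2v a u v).deriv, (hX3v a u v ha').deriv]
  constructor
  · trans ((((a * cos u * sinh (a*u) - sin u * cosh (a*u)) * (a * sin (a*v) * cosh v + cos (a*v) * sinh v) + (cos u * sinh (a*u) + a * sin u * cosh (a*u)) * (sin (a*v) * cosh v - a * cos (a*v) * sinh v) - (a^2+1) * (sin u * cosh v))^2 + ((cos u * cosh (a*u) + a * sin u * sinh (a*u)) * (a * sin (a*v) * cosh v + cos (a*v) * sinh v) - (a * cos u * cosh (a*u) - sin u * sinh (a*u)) * (sin (a*v) * cosh v - a * cos (a*v) * sinh v) + (a^2+1) * (cos u * cosh v))^2 - ((a^2+1) * (sin (a*v) * cosh (a*u)))^2) / (a^2+1)^2)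
    · field_simp
    · trans ((((a * cos (a*v) * cosh v + sin (a*v) * sinh v) * (a * cos u * cosh (a*u) + sin u * sinh (a*u)) + (cos (a*v) * cosh v - a * sin (a*v) * sinh v) * (cos u * cosh (a*u) - a * sin u * sinh (a*u)) + (a^2+1) * (cos u * sinh v))^2 + ((a * cos (a*v) * cosh v + sin (a*v) * sinh v) * (a * sin u * cosh (a*u) - cos u * sinh (a*u)) + (cos (a*v) * cosh v - a * sin (a*v) * sinh v) * (a * cos u * sinh (a*u) + sin u * cosh (a*u)) + (a^2+1) * (sin u * sinh v))^2 - ((a^2+1) * (cos (a*v) * sinh (a*u)))^2) / (a^2+1)^2)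
      · have key : ((a * cos u * sinh (a*u) - sin u * cosh (a*u)) * (a * sin (a*v) * cosh v + cos (a*v) * sinh v) + (cos u * sinh (a*u) + a * sin u * cosh (a*u)) * (sin (a*v) * cosh v - a * cos (a*v) * sinh v) - (a^2+1) * (sin u * cosh v))^2 + ((cos u * cosh (a*u) + a * sin u * sinh (a*u)) * (a * sin (a*v) * cosh v + cos (a*v) * sinh v) - (a * cos u * cosh (a*u) - sin u * sinh (a*u)) * (sin (a*v) * cosh v - a * cos (a*v) * sinh v) + (a^2+1) * (cos u * cosh v))^2 - ((a^2+1) * (sin (a*v) * cosh (a*u)))^2 = ((a * cos (a*v) * cosh v + sin (a*v) * sinh v) * (a * cos u * cosh (a*u) + sin u * sinh (a*u)) + (cos (a*v) * cosh v - a * sin (a*v) * sinh v) * (cos u * cosh (a*u) - a * sin u * sinh (a*u)) + (a^2+1) * (cos u * sinh v))^2 + ((a * cos (a*v) * cosh v + sin (a*v) * sinh v) * (a * sin u * cosh (a*u) - cos u * sinh (a*u)) + (cos (a*v) * cosh v - a * sin (a*v) * sinh v) * (a * cos u * sinh (a*u) + sin u * cosh (a*u)) + (a^2+1) * (sin u *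 sinh v))^2 - ((a^2+1) * (cos (a*v) * sinh (a*u)))^2 := by
          linear_combination
            ((a^2+1)^2 * ((cosh v^2 - sinh v^2) * (1 + sin (a*v)^2 * sinh (a*u)^2 - cos (a*v)^2 * cosh (a*u)^2))) * hsu
            + ((a^2+1)^2 * (sinh (a*u)^2 * (cosh v^2 - sinh v^2) - cosh (a*u)^2)) * hSV
            + ((a^2+1)^2 * (-1 + cos (a*v)^2 - cos (a*v)^2 * (cosh v^2 - sinh v^2))) * hch
            + ((a^2+1)^2 * (1 + sinh (a*u)^2 - cos (a*v)^2 - 2 * cos (a*v)^2 * sinh (a*u)^2)) * hc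
        rw [key]
      · field_simp
  · trans ((((a * cos u * sinh (a*u) - sin u * cosh (a*u)) * (a * sin (a*v) * cosh v + cos (a*v) * sinh v) + (cos u * sinh (a*u) + a * sin u * cosh (a*u)) * (sin (a*v) * cosh v - a * cos (a*v) * sinh v) - (a^2+1) * (sin u * cosh v)) * ((a * cos (a*v) * cosh v + sin (a*v) * sinh v) * (a * cos u * cosh (a*u) + sin u * sinh (a*u)) + (cos (a*v) * cosh v - a * sin (a*v) * sinh v) * (cos u * cosh (a*u) - a * sin u * sinh (a*u)) + (a^2+1) * (cos u * sinh v)) + ((cos u * cosh (a*u) + a * sin u * sinh (a*u)) * (a * sin (a*v) * cosh v + cos (a*v) * sinh v) - (a * cos u * cosh (a*u) - sin u * sinh (a*u)) * (sin (a*v) * cosh v - a * cos (a*v) * sinh v) + (a^2+1) * (cos u * cosh v)) * ((a * cos (a*v) * cosh v + sin (a*v) * sinh v) * (a * sin u * cosh (a*u) - cos u * sinh (a*u)) + (cos (a*v) * cosh v - a * sin (a*v) * sinh v) * (a * cos u * sinh (a*u) + sin u * cosh (a*u)) + (a^2+1) * (sin u * sinh v)) - ((a^2+1) * (sin (a*v)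 * cosh (a*u))) * ((a^2+1) * (cos (a*v) * sinh (a*u)))) / (a^2+1)^2)
    · field_simp
    · have key : ((a * cos u * sinh (a*u) - sin u * cosh (a*u)) * (a * sin (a*v) * cosh v + cos (a*v) * sinh v) + (cos u * sinh (a*u) + a * sin u * cosh (a*u)) * (sin (a*v) * cosh v - a * cos (a*v) * sinh v) - (a^2+1) * (sin u * cosh v)) * ((a * cos (a*v) * cosh v + sin (a*v) * sinh v) * (a * cos u * cosh (a*u) + sin u * sinh (a*u)) + (cos (a*v) * cosh v - a * sin (a*v) * sinh v) * (cos u * cosh (a*u) - a * sin u * sinh (a*u)) + (a^2+1) * (cos u * sinh v)) + ((cos u * cosh (a*u) + a * sin u * sinh (a*u)) * (a * sin (a*v) * cosh v + cos (a*v) * sinh v) - (a * cos u * cosh (a*u) - sin u * sinh (a*u)) * (sin (a*v) * cosh v - a * cos (a*v) * sinh v) + (a^2+1) * (cos u * cosh v)) * ((a * cos (a*v) * cosh v + sin (a*v) * sinh v) * (a * sin u * cosh (a*u) - cos u * sinh (a*u)) + (cos (a*v) * cosh v - a * sin (a*v) * sinh v) * (a * cos u * sinh (a*u) + sin u * cosh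 (a*u)) + (a^2+1) * (sin u * sinh v)) - ((a^2+1) * (sin (a*v) * cosh (a*u))) * ((a^2+1) * (cos (a*v) * sinh (a*u))) = 0 := by
        linear_combination
          ((a^2+1)^2 * (cos (a*v) * sin (a*v) * cosh (a*u) * sinh (a*u) * (cosh v^2 - sinh v^2))) * hsu
          + ((a^2+1)^2 * (cos (a*v) * sin (a*v) * cosh (a*u) * sinh (a*u))) * hc
      rw [key, zero_div]
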